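/- Let N ≥ 2 be an integer. For every β with 0 ≤ β < N/2 there exists a positive constant c_β (depending only on N and β) such that for every t₀ ≥ 1 and all (x,t) ∈ ℝ^N × [0,∞), Φ_β(x,t) ≥ c_β (t₀ + t + |x|²/4)^{−β}; in particular Φ_β is strictly positive. -/

import Mathlib

open MeasureTheory Real

/-- Kummer's confluent hypergeometric function `M(a,c;z) = ∑ (a)_n/(c)_n zⁿ/n!`. -/
noncomputable def kummerM (a c z : ℝ) : ℝ :=
  ∑' n : ℕ, ((ascPochhammer ℝ n).eval a / (ascPochhammer ℝ n).eval c) * z ^ n / (n.factorial : ℝ)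

/-- The weight function
`Φ_γ(x,t) = (t₀+t)^{-γ} exp(-|x|²/(4(t₀+t))) M(N/2-γ, N/2; |x|²/(4(t₀+t)))`. -/
noncomputable def Phi (N : ℕ) (t₀ γ : ℝ) (x : EuclideanSpace ℝ (Fin N)) (t : ℝ) : ℝ :=
  (t₀ + t) ^ (-γ) * Real.exp (-‖x‖ ^ 2 / (4 * (t₀ + t))) *
    kummerM ((N : ℝ) / 2 - γ) ((N : ℝ) / 2) (‖x‖ ^ 2 / (4 * (t₀ + t)))

open Finset

lemma asc_eval_prod (x : ℝ) (n : ℕ) :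
    (ascPochhammer ℝ n).eval x = ∏ k ∈ range n, (x + k) := by
  induction n with
  | zero => simp
  | succ n ih => rw [ascPochhammer_succ_eval, ih, prod_range_succ]

lemma log_one_sub_ge {x x₀ : ℝ} (hx : 0 ≤ x) (hxx : x ≤ x₀) (h1 : x₀ < 1) :
    -x - x ^ 2 / (1 - x₀) ≤ Real.log (1 - x) := by
  have h1x : 0 < 1 - x := by linarith
  have h10 : 0 < 1 - x₀ := by linarith
  have key : Real.log (1 / (1 - x)) ≤ 1 / (1 - x) - 1 :=
    Real.log_le_sub_one_of_pos (by positivity)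
  rw [Real.log_div one_ne_zero (ne_of_gt h1x), Real.log_one] at key
  have h2 : 1 / (1 - x) - 1 = x + x ^ 2 / (1 - x) := by field_simp; try ring
  have h3 : x ^ 2 / (1 - x) ≤ x ^ 2 / (1 - x₀) := by gcongr <;> linarith
  linarith

lemma sum_inv_shift {c : ℝ} (hc : 1 ≤ c) (n : ℕ) :
    ∑ k ∈ range n, 1 / (c + 1 + k) ≤ Real.log (c + n) - Real.log c := by
  induction n with
  | zero => simp
  | succ n ih =>
    rw [Finset.sum_range_succ]
    have hpos : (0 : ℝ) < c + n := by positivity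
    have key : 1 / (c + 1 + n) ≤ Real.log (c + n + 1) - Real.log (c + n) := by
      have ht : (0 : ℝ) < (c + n) / (c + n + 1) := by positivity
      have h := Real.log_le_sub_one_of_pos ht
      rw [Real.log_div (ne_of_gt hpos) (by positivity)] at h
      have h2 : (c + n) / (c + n + 1) - 1 = -(1 / (c + n + 1)) := by field_simp; ring
      rw [h2] at h
      have : c + 1 + (n : ℝ) = c + n + 1 := by ring
      rw [this]
      linarith
    push_cast
    rw [show c + ((n : ℝ) + 1) = c + (n : ℝ) + 1 from by ring]
    linarith

lemma sum_inv_le {c : ℝ} (hc : 1 ≤ c) (n : ℕ) :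
    ∑ k ∈ range n, 1 / (c + k) ≤ 1 + Real.log (c + n) := by
  have hc0 : (0 : ℝ) < c := by linarith
  have hlogc : 0 ≤ Real.log c := Real.log_nonneg hc
  cases n with
  | zero =>
    simp only [range_zero, sum_empty, Nat.cast_zero, add_zero]
    linarith
  | succ n =>
    rw [Finset.sum_range_succ']
    have h := sum_inv_shift hc n
    have heq : ∑ k ∈ range n, 1 / (c + ((k : ℕ) + 1 : ℕ)) = ∑ k ∈ range n, 1 / (c + 1 + k) := by
      apply Finset.sum_congr rfl
      intro k _
      push_cast
      try ring_nf
    have hlog : Real.log (c + n) ≤ Real.log (c + (n + 1 : ℕ)) := by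
      apply Real.log_le_log (by positivity)
      push_cast; linarith
    have h0 : 1 / (c + (0 : ℕ)) ≤ 1 := by
      rw [div_le_one (by positivity)]; push_cast; linarith
    calc (∑ k ∈ range n, 1 / (c + ((k : ℕ) + 1 : ℕ))) + 1 / (c + (0 : ℕ))
        ≤ (Real.log (c + n) - Real.log c) + 1 := by rw [heq]; linarith
      _ ≤ 1 + Real.log (c + (n + 1 : ℕ)) := by linarith

lemma sum_inv_sq_le {c : ℝ} (hc : 1 ≤ c) (n : ℕ) :
    ∑ k ∈ range n, (1 / (c + k)) ^ 2 ≤ 2 := by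
  have hc0 : (0 : ℝ) < c := by linarith
  have key : ∀ m : ℕ, ∑ k ∈ range m, (1 / (c + 1 + k)) ^ 2 ≤ 1 / c - 1 / (c + m) := by
    intro m
    induction m with
    | zero => simp
    | succ m ih =>
      rw [Finset.sum_range_succ]
      have hpos : (0 : ℝ) < c + m := by positivity
      have hpos1 : (0 : ℝ) < c + m + 1 := by positivity
      have step : (1 / (c + 1 + m)) ^ 2 ≤ 1 / (c + m) - 1 / (c + m + 1) := by
        have h1 : 1 / (c + m) - 1 / (c + m + 1) = 1 / ((c + m) * (c + m + 1)) := by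
          field_simp
          try ring
        rw [h1]
        have h2 : (c + m) * (c + m + 1) ≤ (c + 1 + m) ^ 2 := by nlinarith
        rw [div_pow, one_pow, div_le_div_iff₀ (by positivity) (by positivity)]
        nlinarith
      have : (1 / (c + ((m : ℝ) + 1))) ≤ 1 / (c + m) := by
        gcongr <;> linarith
      push_cast
      push_cast at ih
      rw [show c + ((m : ℝ) + 1) = c + (m : ℝ) + 1 from by ring]
      linarith
  cases n with
  | zero => simp
  | succ n =>
    rw [Finset.sum_range_succ']
    have heq : ∑ k ∈ range n, (1 / (c + ((k : ℕ) + 1 : ℕ))) ^ 2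
        = ∑ k ∈ range n, (1 / (c + 1 + k)) ^ 2 := by
      apply Finset.sum_congr rfl
      intro k _
      push_cast
      try ring_nf
    have h := key n
    have h0 : (1 / (c + (0 : ℕ))) ^ 2 ≤ 1 := by
      have : 1 / (c + (0 : ℕ)) ≤ 1 := by
        rw [div_le_one (by positivity)]; push_cast; linarith
      have h1 : 0 ≤ 1 / (c + (0 : ℕ)) := by positivity
      nlinarith
    have hc1 : 1 / c ≤ 1 := by rw [div_le_one hc0]; linarith
    have hcn : 0 < 1 / (c + (n : ℝ)) := by positivity
    rw [heq]
    linarith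

lemma prod_ratio_lower {c β : ℝ} (hc : 1 ≤ c) (hβ : 0 ≤ β) (hβc : β < c) (n : ℕ) :
    Real.exp (-β - 2 * β ^ 2 / (1 - β / c)) * (c + n) ^ (-β)
      ≤ ∏ k ∈ range n, ((c - β + k) / (c + k)) := by
  have hc0 : (0 : ℝ) < c := by linarith
  have hx₀ : β / c < 1 := (div_lt_one hc0).mpr hβc
  have hx₀0 : 0 ≤ β / c := by positivity
  have hE : 0 ≤ β ^ 2 / (1 - β / c) := by
    apply div_nonneg (by positivity); linarith
  have hfac : ∀ k : ℕ, (0 : ℝ) < (c - β + k) / (c + k) := by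
    intro k
    apply div_pos _ (by positivity)
    have : (0 : ℝ) ≤ (k : ℝ) := Nat.cast_nonneg k
    linarith
  have hP : 0 < ∏ k ∈ range n, ((c - β + k) / (c + k)) :=
    Finset.prod_pos fun k _ => hfac k
  have hcn : (0 : ℝ) < c + n := by positivity
  have hterm : ∀ k ∈ range n,
      -(β * (1 / (c + k))) - β ^ 2 / (1 - β / c) * (1 / (c + k)) ^ 2
        ≤ Real.log ((c - β + k) / (c + k)) := by
    intro k _
    have hck : (0 : ℝ) < c + k := by positivity
    have hxx : β / (c + k) ≤ β / c := by
      have hle : c ≤ c + k := le_add_of_nonneg_right (Nat.cast_nonneg k)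
      gcongr
    have hx0 : 0 ≤ β / (c + k) := by positivity
    have h := log_one_sub_ge hx0 hxx hx₀
    have heq : (c - β + k) / (c + k) = 1 - β / (c + k) := by
      field_simp
      try ring
    rw [heq]
    have heq2 : -(β * (1 / (c + k))) - β ^ 2 / (1 - β / c) * (1 / (c + k)) ^ 2
        = -(β / (c + k)) - (β / (c + k)) ^ 2 / (1 - β / c) := by
      ring
    rw [heq2]
    exact h
  have hlog : (-β - 2 * β ^ 2 / (1 - β / c)) + (-β) * Real.log (c + n)
      ≤ Real.log (∏ k ∈ range n, ((c - β + k) / (c + k))) := by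
    rw [Real.log_prod (fun k _ => ne_of_gt (hfac k))]
    have h1 := sum_inv_le hc n
    have h2 := sum_inv_sq_le hc n
    have hs1 : ∑ k ∈ range n,
        (-(β * (1 / (c + k))) - β ^ 2 / (1 - β / c) * (1 / (c + k)) ^ 2)
        = -(β * ∑ k ∈ range n, 1 / (c + k))
          - β ^ 2 / (1 - β / c) * ∑ k ∈ range n, (1 / (c + k)) ^ 2 := by
      rw [Finset.sum_sub_distrib, Finset.sum_neg_distrib, ← Finset.mul_sum, ← Finset.mul_sum]
    have h3 := Finset.sum_le_sum hterm
    rw [hs1] at h3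
    have h4 : β * ∑ k ∈ range n, 1 / (c + k) ≤ β * (1 + Real.log (c + n)) :=
      mul_le_mul_of_nonneg_left h1 hβ
    have h5 : β ^ 2 / (1 - β / c) * ∑ k ∈ range n, (1 / (c + k)) ^ 2
        ≤ β ^ 2 / (1 - β / c) * 2 := mul_le_mul_of_nonneg_left h2 hE
    have hexp : β * (1 + Real.log (c + n)) = β + β * Real.log (c + n) := by ring
    have hexp2 : -β - 2 * β ^ 2 / (1 - β / c) + -β * Real.log (c + n)
        = -(β + β * Real.log (c + n)) - β ^ 2 / (1 - β / c) * 2 := by ring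
    rw [hexp2]
    rw [hexp] at h4
    linarith
  calc Real.exp (-β - 2 * β ^ 2 / (1 - β / c)) * (c + n) ^ (-β)
      = Real.exp ((-β - 2 * β ^ 2 / (1 - β / c)) + (-β) * Real.log (c + n)) := by
        rw [Real.exp_add, Real.rpow_def_of_pos hcn, mul_comm (Real.log (c + n)) (-β)]
    _ ≤ Real.exp (Real.log (∏ k ∈ range n, ((c - β + k) / (c + k)))) :=
        Real.exp_le_exp.mpr hlog
    _ = ∏ k ∈ range n, ((c - β + k) / (c + k)) := Real.exp_log hP

lemma exp_half_le_sum {z : ℝ} (hz : 0 ≤ z) :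
    Real.exp z / 2 ≤ ∑ n ∈ range (⌈2 * z⌉₊ + 2), z ^ n / n.factorial := by
  set K := ⌈2 * z⌉₊ with hK
  have hKz : 2 * z ≤ K := Nat.le_ceil _
  have hsum := Real.summable_pow_div_factorial z
  have hexp : Real.exp z = ∑' n : ℕ, z ^ n / n.factorial := by
    rw [Real.exp_eq_exp_ℝ, NormedSpace.exp_eq_tsum_div]
  have hstep : ∀ i : ℕ, z ^ (K + i) / (K + i).factorial
      ≤ (1 / 2) ^ i * (z ^ K / K.factorial) := by
    intro i
    induction i with
    | zero => simp
    | succ i ih =>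
      have hfac : ((K + (i + 1)).factorial : ℝ)
          = ((K + i).factorial : ℝ) * ((K + i + 1 : ℕ) : ℝ) := by
        rw [show K + (i + 1) = (K + i) + 1 from rfl, Nat.factorial_succ]
        push_cast
        ring
      have hd : (0 : ℝ) < ((K + i + 1 : ℕ) : ℝ) := by positivity
      have hq : z / ((K + i + 1 : ℕ) : ℝ) ≤ 1 / 2 := by
        rw [div_le_div_iff₀ hd (by norm_num)]
        push_cast
        linarith
      have heq : z ^ (K + (i + 1)) / ((K + (i + 1)).factorial : ℝ)
          = (z ^ (K + i) / (K + i).factorial) * (z / ((K + i + 1 : ℕ) : ℝ)) := by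
        rw [hfac, pow_add, pow_add, pow_one]
        field_simp
        try ring
      rw [heq]
      have h1 : 0 ≤ z / ((K + i + 1 : ℕ) : ℝ) := by positivity
      calc z ^ (K + i) / ((K + i).factorial : ℝ) * (z / ((K + i + 1 : ℕ) : ℝ))
          ≤ ((1 / 2) ^ i * (z ^ K / K.factorial)) * (1 / 2) :=
            mul_le_mul ih hq h1 (by positivity)
        _ = (1 / 2) ^ (i + 1) * (z ^ K / K.factorial) := by ring
  have hKle : z ^ K / K.factorial ≤ Real.exp z := by
    rw [hexp]
    exact Summable.le_tsum hsum K fun n _ => by positivity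
  have htail : ∑' j : ℕ, z ^ (j + (K + 2)) / (j + (K + 2)).factorial
      ≤ Real.exp z / 2 := by
    have hbound : ∀ j : ℕ, z ^ (j + (K + 2)) / (j + (K + 2)).factorial
        ≤ (1 / 2) ^ j * (Real.exp z / 4) := by
      intro j
      have h := hstep (2 + j)
      rw [show K + (2 + j) = j + (K + 2) from by ring] at h
      calc z ^ (j + (K + 2)) / (j + (K + 2)).factorial
          ≤ (1 / 2) ^ (2 + j) * (z ^ K / K.factorial) := h
        _ ≤ (1 / 2) ^ (2 + j) * Real.exp z := by
            apply mul_le_mul_of_nonneg_left hKle (by positivity)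
        _ = (1 / 2) ^ j * (Real.exp z / 4) := by
            rw [pow_add]
            ring
    have hgsum : Summable fun j : ℕ => (1 / 2 : ℝ) ^ j * (Real.exp z / 4) :=
      (summable_geometric_of_lt_one (by norm_num) (by norm_num)).mul_right _
    have hlsum : Summable fun j : ℕ => z ^ (j + (K + 2)) / ((j + (K + 2)).factorial : ℝ) :=
      (summable_nat_add_iff (f := fun n : ℕ => z ^ n / (n.factorial : ℝ)) (K + 2)).mpr hsum
    calc ∑' j : ℕ, z ^ (j + (K + 2)) / (j + (K + 2)).factorial
        ≤ ∑' j : ℕ, (1 / 2 : ℝ) ^ j * (Real.exp z / 4) := Summable.tsum_le_tsum hbound hlsum hgsum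
      _ = Real.exp z / 2 := by
          rw [tsum_mul_right, tsum_geometric_of_lt_one (by norm_num) (by norm_num)]
          ring
  have hsplit := Summable.sum_add_tsum_nat_add (f := fun n : ℕ => z ^ n / (n.factorial : ℝ)) (K + 2) hsum
  have heq2 : ∑ n ∈ range (K + 2), z ^ n / (n.factorial : ℝ)
      = Real.exp z - ∑' j : ℕ, z ^ (j + (K + 2)) / ((j + (K + 2)).factorial : ℝ) := by
    rw [hexp, ← hsplit]
    ring
  rw [heq2]
  linarith

lemma kummer_lower {c β : ℝ} (hc : 1 ≤ c) (hβ : 0 ≤ β) (hβc : β < c) {z : ℝ} (hz : 0 ≤ z) :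
    Real.exp (-β - 2 * β ^ 2 / (1 - β / c)) / 2 * ((c + 2) * (1 + z)) ^ (-β)
      ≤ Real.exp (-z) * kummerM (c - β) c z := by
  have hc0 : (0 : ℝ) < c := by linarith
  set A := Real.exp (-β - 2 * β ^ 2 / (1 - β / c)) with hA
  have hA0 : 0 < A := Real.exp_pos _
  set r : ℕ → ℝ := fun n => (ascPochhammer ℝ n).eval (c - β) / (ascPochhammer ℝ n).eval c
    with hr
  have hrprod : ∀ n, r n = ∏ k ∈ range n, ((c - β + k) / (c + k)) := by
    intro n
    simp only [hr]
    rw [asc_eval_prod, asc_eval_prod, ← Finset.prod_div_distrib]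
  have hfacpos : ∀ k : ℕ, (0 : ℝ) < (c - β + k) / (c + k) := by
    intro k
    apply div_pos _ (by positivity)
    have : (0 : ℝ) ≤ (k : ℝ) := Nat.cast_nonneg k
    linarith
  have hfacle : ∀ k : ℕ, (c - β + k) / (c + k) ≤ 1 := by
    intro k
    rw [div_le_one (by positivity)]
    have : (0 : ℝ) ≤ (k : ℝ) := Nat.cast_nonneg k
    linarith
  have hrpos : ∀ n, 0 < r n := by
    intro n; rw [hrprod]; exact Finset.prod_pos fun k _ => hfacpos k
  have hrle1 : ∀ n, r n ≤ 1 := by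
    intro n; rw [hrprod]
    exact Finset.prod_le_one (fun k _ => (hfacpos k).le) (fun k _ => hfacle k)
  have hrmono : ∀ m n : ℕ, m ≤ n → r n ≤ r m := by
    intro m n hmn
    rw [hrprod, hrprod, ← Finset.prod_range_mul_prod_Ico _ hmn]
    apply mul_le_of_le_one_right (Finset.prod_pos fun k _ => hfacpos k).le
    exact Finset.prod_le_one (fun k _ => (hfacpos k).le) (fun k _ => hfacle k)
  have hg0 : ∀ n : ℕ, 0 ≤ r n * z ^ n / (n.factorial : ℝ) := by
    intro n
    have := (hrpos n).le
    positivity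
  have hgle : ∀ n : ℕ, r n * z ^ n / (n.factorial : ℝ) ≤ z ^ n / n.factorial := by
    intro n
    apply div_le_div_of_nonneg_right _ (by positivity)
    · calc r n * z ^ n ≤ 1 * z ^ n :=
        mul_le_mul_of_nonneg_right (hrle1 n) (by positivity)
        _ = z ^ n := one_mul _
  have hgsum : Summable fun n : ℕ => r n * z ^ n / (n.factorial : ℝ) :=
    Summable.of_nonneg_of_le hg0 hgle (Real.summable_pow_div_factorial z)
  have hkum : kummerM (c - β) c z = ∑' n : ℕ, r n * z ^ n / (n.factorial : ℝ) := rfl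
  set M : ℕ := ⌈2 * z⌉₊ + 1 with hM
  have h1 : ∑ n ∈ range (M + 1), r n * z ^ n / (n.factorial : ℝ)
      ≤ ∑' n : ℕ, r n * z ^ n / (n.factorial : ℝ) :=
    Summable.sum_le_tsum _ (fun n _ => hg0 n) hgsum
  have h2 : r M * ∑ n ∈ range (M + 1), z ^ n / (n.factorial : ℝ)
      ≤ ∑ n ∈ range (M + 1), r n * z ^ n / (n.factorial : ℝ) := by
    rw [Finset.mul_sum]
    apply Finset.sum_le_sum
    intro n hn
    have hnM : n ≤ M := Nat.lt_succ_iff.mp (Finset.mem_range.mp hn)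
    calc r M * (z ^ n / (n.factorial : ℝ))
        ≤ r n * (z ^ n / (n.factorial : ℝ)) :=
          mul_le_mul_of_nonneg_right (hrmono n M hnM) (by positivity)
      _ = r n * z ^ n / (n.factorial : ℝ) := by ring
  have h3 : Real.exp z / 2 ≤ ∑ n ∈ range (M + 1), z ^ n / (n.factorial : ℝ) := by
    have := exp_half_le_sum hz
    rw [hM]
    exact this
  have h4 : r M * (Real.exp z / 2) ≤ ∑' n : ℕ, r n * z ^ n / (n.factorial : ℝ) := by
    calc r M * (Real.exp z / 2)
        ≤ r M * ∑ n ∈ range (M + 1), z ^ n / (n.factorial : ℝ) :=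
          mul_le_mul_of_nonneg_left h3 (hrpos M).le
      _ ≤ ∑ n ∈ range (M + 1), r n * z ^ n / (n.factorial : ℝ) := h2
      _ ≤ _ := h1
  have h5 : A * (c + M) ^ (-β) ≤ r M := by
    rw [hrprod]
    exact prod_ratio_lower hc hβ hβc M
  have hM2 : (M : ℝ) ≤ 2 * z + 2 := by
    rw [hM]
    push_cast
    have := Nat.ceil_lt_add_one (by positivity : (0 : ℝ) ≤ 2 * z)
    linarith
  have hcM : c + M ≤ (c + 2) * (1 + z) := by
    have h2z : 2 * z ≤ (c + 2) * z := by nlinarith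
    nlinarith
  have h7 : ((c + 2) * (1 + z)) ^ (-β) ≤ (c + (M : ℝ)) ^ (-β) :=
    Real.rpow_le_rpow_of_nonpos (by positivity) hcM (by linarith)
  have hfinal : A / 2 * ((c + 2) * (1 + z)) ^ (-β) ≤ r M / 2 := by
    have : A * ((c + 2) * (1 + z)) ^ (-β) ≤ A * (c + (M : ℝ)) ^ (-β) :=
      mul_le_mul_of_nonneg_left h7 hA0.le
    have := le_trans this h5
    linarith
  have hez : (0 : ℝ) < Real.exp (-z) := Real.exp_pos _
  calc A / 2 * ((c + 2) * (1 + z)) ^ (-β)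
      ≤ r M / 2 := hfinal
    _ = Real.exp (-z) * (r M * (Real.exp z / 2)) := by
        rw [Real.exp_neg]
        field_simp
        try ring
    _ ≤ Real.exp (-z) * kummerM (c - β) c z := by
        rw [hkum]
        exact mul_le_mul_of_nonneg_left h4 hez.le

theorem Phi_lower_bound (N : ℕ) (hN : 2 ≤ N) (β : ℝ) (hβ : 0 ≤ β) (hβ' : β < (N : ℝ) / 2) :
    ∃ c : ℝ, 0 < c ∧ ∀ t₀ : ℝ, 1 ≤ t₀ → ∀ (x : EuclideanSpace ℝ (Fin N)) (t : ℝ), 0 ≤ t →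
      c * (t₀ + t + ‖x‖ ^ 2 / 4) ^ (-β) ≤ Phi N t₀ β x t ∧ 0 < Phi N t₀ β x t := by
  set c : ℝ := (N : ℝ) / 2 with hcdef
  have hc : 1 ≤ c := by
    rw [hcdef]
    have h2 : (2 : ℝ) ≤ (N : ℝ) := by exact_mod_cast hN
    linarith
  have hc20 : (0 : ℝ) < c + 2 := by linarith
  have hcb0 : (0 : ℝ) < (c + 2) ^ (-β) := Real.rpow_pos_of_pos hc20 _
  refine ⟨Real.exp (-β - 2 * β ^ 2 / (1 - β / c)) / 2 * (c + 2) ^ (-β), ?_, ?_⟩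
  · have hex : (0 : ℝ) < Real.exp (-β - 2 * β ^ 2 / (1 - β / c)) := Real.exp_pos _
    positivity
  · intro t₀ ht₀ x t ht
    have hs : (0 : ℝ) < t₀ + t := by linarith
    set s := t₀ + t with hsdef
    set z := ‖x‖ ^ 2 / (4 * s) with hzdef
    have hz : 0 ≤ z := by positivity
    have hkey := kummer_lower hc hβ hβ' hz
    have hPhi : Phi N t₀ β x t = s ^ (-β) * (Real.exp (-z) * kummerM (c - β) c z) := by
      rw [Phi, mul_assoc, neg_div]
    have hsz : s * (1 + z) = s + ‖x‖ ^ 2 / 4 := by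
      rw [hzdef]
      field_simp
      try ring
    have hs0 : (0 : ℝ) < s ^ (-β) := Real.rpow_pos_of_pos hs _
    have hLHS : s ^ (-β) * (Real.exp (-β - 2 * β ^ 2 / (1 - β / c)) / 2
          * ((c + 2) * (1 + z)) ^ (-β))
        = Real.exp (-β - 2 * β ^ 2 / (1 - β / c)) / 2 * (c + 2) ^ (-β)
          * (s + ‖x‖ ^ 2 / 4) ^ (-β) := by
      rw [← hsz, Real.mul_rpow hc20.le (by positivity), Real.mul_rpow hs.le (by positivity)]
      ring
    have hmain : Real.exp (-β - 2 * β ^ 2 / (1 - β / c)) / 2 * (c + 2) ^ (-β)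
        * (s + ‖x‖ ^ 2 / 4) ^ (-β) ≤ Phi N t₀ β x t := by
      rw [← hLHS, hPhi]
      exact mul_le_mul_of_nonneg_left hkey hs0.le
    refine ⟨hmain, lt_of_lt_of_le ?_ hmain⟩
    have hsx : (0 : ℝ) < s + ‖x‖ ^ 2 / 4 := by positivity
    have := Real.rpow_pos_of_pos hsx (-β)
    positivity
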